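/- For every integer j > 1, the prism graph C_{4j} □ K_2 admits an efficient total coloring with 4 colors, i.e., a proper total coloring using colors {0,1,2,3} whose four vertex color classes are each efficient dominating sets. -/

import Mathlib

def IsEDS {V : Type*} (G : SimpleGraph V) (S : Set V) : Prop :=
  (∀ v ∈ S, ∀ w ∈ S, ¬ G.Adj v w) ∧ ∀ v ∉ S, ∃! w, w ∈ S ∧ G.Adj v w

def IsTC {V : Type*} (G : SimpleGraph V) (n : ℕ) (cv : V → ℕ) (ce : V → V → ℕ) : Prop :=
  (∀ v, cv v < n) ∧ (∀ u v, G.Adj u v → ce u v < n) ∧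
  (∀ u v, G.Adj u v → ce u v = ce v u) ∧
  (∀ u v, G.Adj u v → cv u ≠ cv v) ∧
  (∀ u v, G.Adj u v → ce u v ≠ cv u ∧ ce u v ≠ cv v) ∧
  (∀ u v w, G.Adj u v → G.Adj u w → v ≠ w → ce u v ≠ ce u w)

/-- The prism over the cycle `C_n`, i.e. `C_n □ K_2`. -/
def prism (n : ℕ) : SimpleGraph (ZMod n × Fin 2) where
  Adj x y := (x.2 = y.2 ∧ x.1 ≠ y.1 ∧ (y.1 = x.1 + 1 ∨ x.1 = y.1 + 1)) ∨
    (x.1 = y.1 ∧ x.2 ≠ y.2)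
  symm := by
    constructor
    intro x y h
    rcases h with ⟨h1, h2, h3⟩ | ⟨h1, h2⟩
    · exact Or.inl ⟨h1.symm, h2.symm, h3.symm⟩
    · exact Or.inr ⟨h1.symm, h2.symm⟩
  loopless := by
    constructor
    intro x h
    rcases h with ⟨_, h2, _⟩ | ⟨_, h2⟩ <;> exact h2 rfl

/-- Vertex coloring of the prism. -/
def pcv (n : ℕ) : ZMod n × Fin 2 → ℕ := fun x => (x.1.val % 4 + 2 * x.2.val) % 4

/-- Edge coloring of the prism. -/
def pce (n : ℕ) : ZMod n × Fin 2 → ZMod n × Fin 2 → ℕ := fun x y =>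
  if x.2 = y.2 then
    if y.1 = x.1 + 1 then (x.1.val % 4 + 2 + 3 * x.2.val) % 4
    else (y.1.val % 4 + 2 + 3 * y.2.val) % 4
  else (x.1.val % 4 + 3) % 4

theorem stmt5 (j : ℕ) (hj : 1 < j) :
    ∃ (cv : ZMod (4 * j) × Fin 2 → ℕ)
      (ce : (ZMod (4 * j) × Fin 2) → (ZMod (4 * j) × Fin 2) → ℕ),
      IsTC (prism (4 * j)) 4 cv ce ∧
      ∀ c < 4, IsEDS (prism (4 * j)) {v | cv v = c} := by
  haveI : NeZero (4 * j) := ⟨by omega⟩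
  haveI : Fact (1 < 4 * j) := ⟨by omega⟩
  have h4 : (4 : ℕ) ∣ 4 * j := ⟨j, rfl⟩
  have hlt : ∀ a : ZMod (4 * j), a.val % 4 < 4 := fun a => Nat.mod_lt _ (by omega)
  have hstep : ∀ a : ZMod (4 * j), (a + 1).val % 4 = (a.val % 4 + 1) % 4 := by
    intro a
    rw [ZMod.val_add, ZMod.val_one, Nat.mod_mod_of_dvd _ h4]
    omega
  have hsub : ∀ a : ZMod (4 * j), (a - 1).val % 4 = (a.val % 4 + 3) % 4 := by
    intro a
    have h1 := hstep (a - 1)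
    rw [sub_add_cancel] at h1
    have h2 := hlt a; have h3 := hlt (a - 1)
    omega
  have hnei : ∀ a b : ZMod (4 * j), a.val % 4 ≠ b.val % 4 → a ≠ b := by
    intro a b h hab; exact h (by rw [hab])
  have hflipv : ∀ k : Fin 2, (1 - k).val = 1 - k.val := by decide
  have hflipne : ∀ k : Fin 2, k ≠ 1 - k := by decide
  have hfne : ∀ k k' : Fin 2, k ≠ k' → k' = 1 - k := by decide
  have hk2 : ∀ k : Fin 2, k.val < 2 := fun k => k.isLt
  -- shape of neighbors
  have hshape : ∀ (i : ZMod (4 * j)) (k : Fin 2) (y),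
      (prism (4 * j)).Adj (i, k) y → y = (i + 1, k) ∨ y = (i - 1, k) ∨ y = (i, 1 - k) := by
    intro i k y h
    rcases h with ⟨h1, _, h3 | h3⟩ | ⟨h1, h2⟩
    · left; exact Prod.ext h3 h1.symm
    · right; left; exact Prod.ext (eq_sub_iff_add_eq.mpr h3.symm) h1.symm
    · right; right; exact Prod.ext h1.symm (hfne _ _ h2)
  -- basic inequalities in ZMod
  have hne1 : ∀ i : ZMod (4 * j), i ≠ i + 1 := by
    intro i; refine hnei _ _ ?_; rw [hstep]; have := hlt i; omega
  have hne2 : ∀ i : ZMod (4 * j), i ≠ i - 1 := by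
    intro i; refine hnei _ _ ?_; rw [hsub]; have := hlt i; omega
  have hne3 : ∀ i : ZMod (4 * j), i - 1 ≠ i + 1 := by
    intro i; refine hnei _ _ ?_; rw [hsub, hstep]; have := hlt i; omega
  have hne4 : ∀ i : ZMod (4 * j), i ≠ i + 1 + 1 := by
    intro i; refine hnei _ _ ?_; rw [hstep, hstep]; have := hlt i; omega
  -- adjacency facts
  have adj1 : ∀ (i : ZMod (4 * j)) (k : Fin 2), (prism (4 * j)).Adj (i, k) (i + 1, k) :=
    fun i k => Or.inl ⟨rfl, hne1 i, Or.inl rfl⟩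
  have adj2 : ∀ (i : ZMod (4 * j)) (k : Fin 2), (prism (4 * j)).Adj (i, k) (i - 1, k) :=
    fun i k => Or.inl ⟨rfl, hne2 i, Or.inr (sub_add_cancel i 1).symm⟩
  have adj3 : ∀ (i : ZMod (4 * j)) (k : Fin 2), (prism (4 * j)).Adj (i, k) (i, 1 - k) :=
    fun i k => Or.inr ⟨rfl, hflipne k⟩
  -- edge color computations
  have hA : ∀ (i : ZMod (4 * j)) (k : Fin 2),
      pce (4 * j) (i, k) (i + 1, k) = (i.val % 4 + 2 + 3 * k.val) % 4 := by
    intro i k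
    simp only [pce, if_true]
  have hA' : ∀ (i : ZMod (4 * j)) (k : Fin 2),
      pce (4 * j) (i + 1, k) (i, k) = (i.val % 4 + 2 + 3 * k.val) % 4 := by
    intro i k
    simp only [pce, if_true]
    rw [if_neg (hne4 i)]
  have hB : ∀ (i : ZMod (4 * j)) (k : Fin 2),
      pce (4 * j) (i, k) (i - 1, k) = ((i.val % 4 + 3) % 4 + 2 + 3 * k.val) % 4 := by
    intro i k
    simp only [pce, if_true]
    rw [if_neg (hne3 i), hsub]
  have hC : ∀ (i : ZMod (4 * j)) (k : Fin 2),
      pce (4 * j) (i, k) (i, 1 - k) = (i.val % 4 + 3) % 4 := by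
    intro i k
    simp only [pce]
    rw [if_neg (hflipne k)]
  have hC' : ∀ (i : ZMod (4 * j)) (k : Fin 2),
      pce (4 * j) (i, 1 - k) (i, k) = (i.val % 4 + 3) % 4 := by
    intro i k
    simp only [pce]
    rw [if_neg (Ne.symm (hflipne k))]
  -- vertex color computations
  have cv0 : ∀ (i : ZMod (4 * j)) (k : Fin 2),
      pcv (4 * j) (i, k) = (i.val % 4 + 2 * k.val) % 4 := fun _ _ => rfl
  have cvA : ∀ (i : ZMod (4 * j)) (k : Fin 2),
      pcv (4 * j) (i + 1, k) = ((i.val % 4 + 1) % 4 + 2 * k.val) % 4 := by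
    intro i k; simp only [pcv]; rw [hstep]
  have cvB : ∀ (i : ZMod (4 * j)) (k : Fin 2),
      pcv (4 * j) (i - 1, k) = ((i.val % 4 + 3) % 4 + 2 * k.val) % 4 := by
    intro i k; simp only [pcv]; rw [hsub]
  have cvC : ∀ (i : ZMod (4 * j)) (k : Fin 2),
      pcv (4 * j) (i, 1 - k) = (i.val % 4 + 2 * (1 - k.val)) % 4 := by
    intro i k; simp only [pcv]; rw [hflipv]
  refine ⟨pcv (4 * j), pce (4 * j), ⟨?_, ?_, ?_, ?_, ?_, ?_⟩, ?_⟩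
  · -- cv < 4
    intro v; exact Nat.mod_lt _ (by omega)
  · -- ce < 4
    intro u v _
    simp only [pce]
    split_ifs <;> exact Nat.mod_lt _ (by omega)
  · -- symmetry
    rintro ⟨i, k⟩ v h
    rcases hshape i k v h with rfl | rfl | rfl
    · rw [hA, hA']
    · have e := hA (i - 1) k
      rw [sub_add_cancel] at e
      rw [hB, e, hsub]
    · rw [hC, hC']
  · -- proper on vertices
    rintro ⟨i, k⟩ v h
    rcases hshape i k v h with rfl | rfl | rfl
    · rw [cv0, cvA]; have := hlt i; have := hk2 k; omega
    · rw [cv0, cvB]; have := hlt i; have := hk2 k; omega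
    · rw [cv0, cvC]; have := hlt i; have := hk2 k; omega
  · -- edge color differs from endpoint colors
    rintro ⟨i, k⟩ v h
    rcases hshape i k v h with rfl | rfl | rfl
    · rw [hA, cv0, cvA]; have := hlt i; have := hk2 k; omega
    · rw [hB, cv0, cvB]; have := hlt i; have := hk2 k; omega
    · rw [hC, cv0, cvC]; have := hlt i; have := hk2 k; omega
  · -- incident edges get distinct colors
    rintro ⟨i, k⟩ v w h1 h2 hvw
    rcases hshape i k v h1 with rfl | rfl | rfl <;>
      rcases hshape i k w h2 with rfl | rfl | rfl <;>
      first
        | exact absurd rfl hvw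
        | (rw [hA, hB]; have := hlt i; have := hk2 k; omega)
        | (rw [hA, hC]; have := hlt i; have := hk2 k; omega)
        | (rw [hB, hA]; have := hlt i; have := hk2 k; omega)
        | (rw [hB, hC]; have := hlt i; have := hk2 k; omega)
        | (rw [hC, hA]; have := hlt i; have := hk2 k; omega)
        | (rw [hC, hB]; have := hlt i; have := hk2 k; omega)
  · -- EDS
    intro c hc
    constructor
    · -- independence
      rintro v hv w hw hadj
      obtain ⟨i, k⟩ := v
      have hv' : pcv (4 * j) (i, k) = c := hv
      have hw' : pcv (4 * j) w = c := hw
      rcases hshape i k w hadj with rfl | rfl | rfl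
      · rw [cv0] at hv'; rw [cvA] at hw'; have := hlt i; have := hk2 k; omega
      · rw [cv0] at hv'; rw [cvB] at hw'; have := hlt i; have := hk2 k; omega
      · rw [cv0] at hv'; rw [cvC] at hw'; have := hlt i; have := hk2 k; omega
    · -- efficient domination
      rintro ⟨i, k⟩ hv
      have hv' : pcv (4 * j) (i, k) ≠ c := hv
      rw [cv0] at hv'
      have ha := hlt i; have hkk := hk2 k
      have hcases : c = ((i.val % 4 + 1) % 4 + 2 * k.val) % 4 ∨
          c = ((i.val % 4 + 3) % 4 + 2 * k.val) % 4 ∨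
          c = (i.val % 4 + 2 * (1 - k.val)) % 4 := by omega
      rcases hcases with hcₐ | hcₐ | hcₐ
      · refine ⟨(i + 1, k), ⟨(cvA i k).trans hcₐ.symm, adj1 i k⟩, ?_⟩
        rintro w ⟨hw1, hw2⟩
        have hw1' : pcv (4 * j) w = c := hw1
        rcases hshape i k w hw2 with rfl | rfl | rfl
        · rfl
        · rw [cvB] at hw1'; omega
        · rw [cvC] at hw1'; omega
      · refine ⟨(i - 1, k), ⟨(cvB i k).trans hcₐ.symm, adj2 i k⟩, ?_⟩
        rintro w ⟨hw1, hw2⟩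
        have hw1' : pcv (4 * j) w = c := hw1
        rcases hshape i k w hw2 with rfl | rfl | rfl
        · rw [cvA] at hw1'; omega
        · rfl
        · rw [cvC] at hw1'; omega
      · refine ⟨(i, 1 - k), ⟨(cvC i k).trans hcₐ.symm, adj3 i k⟩, ?_⟩
        rintro w ⟨hw1, hw2⟩
        have hw1' : pcv (4 * j) w = c := hw1
        rcases hshape i k w hw2 with rfl | rfl | rfl
        · rw [cvA] at hw1'; omega
        · rw [cvB] at hw1'; omega
        · rfl
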